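/- Let S be a transitive subsemigroup of IS(X) such that S contains a nonzero element of finite rank. Then for all i, j ∈ X there exists a ∈ S of finite rank such that a maps i to j and the inverse partial bijection a⁻¹ also belongs to S. -/

import Mathlib

def IsSubsemigroup {X : Type*} (S : Set (X ≃. X)) : Prop :=
  ∀ f ∈ S, ∀ g ∈ S, f.trans g ∈ S

def IsTransitiveSet {X : Type*} (S : Set (X ≃. X)) : Prop :=
  ∀ x y : X, ∃ f ∈ S, f x = some y

def pdom {X : Type*} (f : X ≃. X) : Set X := {x | f x ≠ none}

section Aux

variable {X : Type*}

private def cpw (c : X ≃. X) : ℕ → (X ≃. X)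
  | 0 => PEquiv.refl X
  | n+1 => c.trans (cpw c n)

private lemma cpw_succ_apply (c : X ≃. X) (n : ℕ) (x : X) :
    cpw c (n+1) x = (c x).bind (cpw c n) := rfl

private lemma trans_apply' (f g : X ≃. X) (x : X) : (f.trans g) x = (f x).bind g := rfl

private lemma cpw_add (c : X ≃. X) (m n : ℕ) :
    cpw c (m + n) = (cpw c m).trans (cpw c n) := by
  induction m with
  | zero => simp [cpw, PEquiv.refl_trans]
  | succ m ih =>
      have e : m + 1 + n = (m + n) + 1 := by omega
      rw [e]
      ext x
      rw [cpw_succ_apply, trans_apply', cpw_succ_apply, ih]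
      cases c x with
      | none => simp
      | some y => simp [trans_apply']

private lemma pdom_trans_subset (f g : X ≃. X) : pdom (f.trans g) ⊆ pdom f := by
  intro x hx
  simp only [pdom, Set.mem_setOf_eq, trans_apply'] at hx ⊢
  intro h
  rw [h] at hx
  simp at hx

private lemma finite_pdom_trans (f : X ≃. X) {g : X ≃. X} (hg : (pdom g).Finite) :
    (pdom (f.trans g)).Finite := by
  apply Set.Finite.of_finite_image (f := fun x => f x)
  · apply Set.Finite.subset (hg.image some)
    rintro _ ⟨x, hx, rfl⟩
    simp only [pdom, Set.mem_setOf_eq, trans_apply'] at hx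
    cases hfx : f x with
    | none => rw [hfx] at hx; simp at hx
    | some y =>
        rw [hfx] at hx
        simp only [Option.bind_some] at hx
        exact ⟨y, hx, hfx.symm⟩
  · intro x hx y hy hxy
    have hxy' : f x = f y := hxy
    simp only [pdom, Set.mem_setOf_eq, trans_apply'] at hx hy
    cases hfx : f x with
    | none => rw [hfx] at hx; simp at hx
    | some u =>
        have h1 : u ∈ f x := hfx
        have h2 : u ∈ f y := by rw [← hxy']; exact hfx
        exact PEquiv.inj f h1 h2

end Aux

/-- In a transitive subsemigroup of `IS(X)` containing a nonzero finitary element,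
every pair `(i,j)` is realized by a finitary element whose inverse also lies in `S`. -/
theorem exists_elem_with_inverse {X : Type*} (S : Set (X ≃. X))
    (hS : IsSubsemigroup S) (hStr : IsTransitiveSet S)
    (hfin : ∃ f ∈ S, f ≠ (⊥ : X ≃. X) ∧ (pdom f).Finite) :
    ∀ i j : X, ∃ a ∈ S, (pdom a).Finite ∧ a i = some j ∧ a.symm ∈ S := by
  classical
  intro i j
  obtain ⟨f, hfS, hfne, hffin⟩ := hfin
  -- find a point in the domain of f
  have hx : ∃ x y, f x = some y := by
    by_contra hcon
    push_neg at hcon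
    apply hfne
    ext x
    rw [PEquiv.bot_apply]
    cases hfx : f x with
    | none => rfl
    | some y => exact absurd hfx (hcon x y)
  obtain ⟨x, y, hxy⟩ := hx
  obtain ⟨g, hgS, hgi⟩ := hStr i x
  obtain ⟨h, hhS, hhy⟩ := hStr y j
  set b : X ≃. X := (g.trans f).trans h with hb
  have hbS : b ∈ S := hS _ (hS g hgS f hfS) h hhS
  have hbi : b i = some j := by
    rw [hb, trans_apply', trans_apply', hgi]
    simp [hxy, hhy]
  have hbfin : (pdom b).Finite :=
    Set.Finite.subset (finite_pdom_trans g hffin) (pdom_trans_subset _ _)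
  obtain ⟨w, hwS, hwj⟩ := hStr j i
  set c : X ≃. X := b.trans w with hc
  have hcS : c ∈ S := hS b hbS w hwS
  have hci : c i = some i := by rw [hc, trans_apply', hbi]; simp [hwj]
  have hcfin : (pdom c).Finite := Set.Finite.subset hbfin (pdom_trans_subset _ _)
  -- powers of c
  set D : ℕ → Set X := fun n => pdom (cpw c n) with hD
  have hcpw1 : cpw c 1 = c := by
    show c.trans (PEquiv.refl X) = c
    exact PEquiv.trans_refl c
  have hcpwS : ∀ n, 1 ≤ n → cpw c n ∈ S := by
    intro n hn
    induction n with
    | zero => omega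
    | succ n ih =>
        rcases Nat.eq_or_lt_of_le hn with h1 | h1
        · rw [← h1, hcpw1]; exact hcS
        · exact hS c hcS _ (ih (by omega))
  have hDanti : ∀ n, D (n+1) ⊆ D n := by
    intro n z hz
    simp only [hD, pdom, Set.mem_setOf_eq] at hz ⊢
    rw [cpw_add c n 1, trans_apply'] at hz
    intro hnone
    rw [hnone] at hz
    simp at hz
  have hDle : ∀ m k, D (m + k) ⊆ D m := by
    intro m k
    induction k with
    | zero => exact fun z hz => hz
    | succ k ih => exact fun z hz => ih (hDanti (m+k) hz)
  have hDfin : ∀ n, 1 ≤ n → (D n).Finite := by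
    intro n hn
    apply Set.Finite.subset hcfin
    intro z hz
    have e : n = 1 + (n - 1) := by omega
    have h1 : z ∈ D 1 := hDle 1 (n-1) (by rw [← e]; exact hz)
    have h2 : z ∈ pdom (cpw c 1) := h1
    rwa [hcpw1] at h2
  -- i is in every D n
  have hiD : ∀ n, cpw c n i = some i := by
    intro n
    induction n with
    | zero => rfl
    | succ n ih => rw [cpw_succ_apply, hci]; simpa using ih
  -- stabilization
  have hstab0 : ∃ m, (D (m+2)).ncard = (D (m+1)).ncard := by
    by_contra hcon
    push_neg at hcon
    have hdec : ∀ m, (D (m+2)).ncard < (D (m+1)).ncard := by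
      intro m
      exact lt_of_le_of_ne
        (Set.ncard_le_ncard (hDanti (m+1)) (hDfin (m+1) (by omega))) (hcon m)
    have hlow : ∀ m, (D (m+1)).ncard + m ≤ (D 1).ncard := by
      intro m
      induction m with
      | zero => simp
      | succ m ih =>
          have h1 := hdec m
          have h2 : m + 1 + 1 = m + 2 := by omega
          rw [h2]
          omega
    have := hlow ((D 1).ncard + 1)
    omega
  obtain ⟨m₀, hm₀⟩ := hstab0
  set n₀ : ℕ := m₀ + 1 with hn₀def
  have hn₀1 : 1 ≤ n₀ := by omega
  have hstep : D (n₀ + 1) = D n₀ :=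
    Set.eq_of_subset_of_ncard_le (hDanti n₀) (le_of_eq hm₀.symm) (hDfin n₀ hn₀1)
  have hstab : ∀ k, D (n₀ + k) = D n₀ := by
    intro k
    induction k with
    | zero => rfl
    | succ k ih =>
        apply Set.Subset.antisymm
        · intro z hz
          have h1 : z ∈ D (n₀ + k) := hDanti (n₀ + k) hz
          exact ih ▸ h1
        · intro z hz
          have hz1 : z ∈ D (n₀ + 1) := hstep ▸ hz
          simp only [hD, pdom, Set.mem_setOf_eq] at hz1 ⊢
          rw [cpw_succ_apply] at hz1
          cases hcz : c z with
          | none => rw [hcz] at hz1; simp at hz1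
          | some u =>
              rw [hcz] at hz1
              simp only [Option.bind_some] at hz1
              have huD : u ∈ D n₀ := hz1
              have huD' : u ∈ D (n₀ + k) := ih.symm ▸ huD
              show (c z).bind (cpw c (n₀ + k)) ≠ none
              rw [hcz]
              exact huD'
  have hstab' : ∀ n, n₀ ≤ n → D n = D n₀ := by
    intro n hn
    have e : n = n₀ + (n - n₀) := by omega
    rw [e]; exact hstab (n - n₀)
  set Dd : Set X := D n₀ with hDd
  have hDdfin : Dd.Finite := hDfin n₀ hn₀1
  have hiDd : i ∈ Dd := by
    show cpw c n₀ i ≠ none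
    rw [hiD n₀]
    simp
  have hDsubb : Dd ⊆ pdom b := by
    intro z hz
    have e : n₀ = 1 + (n₀ - 1) := by omega
    have h1 : z ∈ D 1 := hDle 1 (n₀-1) (by rw [← e]; exact hz)
    have h2 : z ∈ pdom (cpw c 1) := h1
    rw [hcpw1] at h2
    show b z ≠ none
    intro hnone
    apply h2
    rw [hc, trans_apply', hnone]
    rfl
  -- c maps Dd into Dd
  have hmap : ∀ z ∈ Dd, ∃ u, c z = some u ∧ u ∈ Dd := by
    intro z hz
    have hz1 : z ∈ D (n₀ + 1) := hstep ▸ hz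
    have hz1' : cpw c (n₀ + 1) z ≠ none := hz1
    rw [cpw_succ_apply] at hz1'
    cases hcz : c z with
    | none => rw [hcz] at hz1'; simp at hz1'
    | some u =>
        rw [hcz] at hz1'
        simp only [Option.bind_some] at hz1'
        exact ⟨u, rfl, hz1'⟩
  have hfinsub : Finite ↥Dd := hDdfin.to_subtype
  -- the permutation induced by c on Dd
  set s : ↥Dd → ↥Dd := fun z => ⟨(hmap z z.2).choose, (hmap z z.2).choose_spec.2⟩ with hsdef
  have hs : ∀ z : ↥Dd, c z.1 = some (s z).1 := fun z => (hmap z z.2).choose_spec.1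
  have hsinj : Function.Injective s := by
    intro z₁ z₂ hz
    apply Subtype.ext
    apply PEquiv.inj c (a₁ := z₁.1) (a₂ := z₂.1) (b := (s z₁).1)
    · show (s z₁).1 ∈ c z₁.1; rw [hs z₁]; rfl
    · show (s z₁).1 ∈ c z₂.1; rw [hs z₂, hz]; rfl
  set σ : ↥Dd ≃ ↥Dd := Equiv.ofBijective s (Finite.injective_iff_bijective.mp hsinj) with hσdef
  have hσ : ∀ z : ↥Dd, c z.1 = some ((σ z) : X) := hs
  have hpowσ : ∀ (k : ℕ) (z : ↥Dd), cpw c k z.1 = some (((σ^k) z : ↥Dd) : X) := by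
    intro k
    induction k with
    | zero =>
        intro z
        rw [pow_zero]
        simp [cpw, PEquiv.refl_apply]
    | succ k ih =>
        intro z
        rw [cpw_succ_apply, hσ z]
        simp only [Option.bind_some]
        rw [ih (σ z)]
        rw [pow_succ, Equiv.Perm.mul_apply]
  -- order of σ
  set K : ℕ := orderOf σ with hKdef
  have hK1 : 1 ≤ K := orderOf_pos σ
  have hσK : σ ^ K = 1 := pow_orderOf_eq_one σ
  set N : ℕ := (n₀ + 1) * K with hNdef
  have hσN : σ ^ N = 1 := by
    rw [hNdef, mul_comm, pow_mul, hσK, one_pow]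
  have hN : n₀ + 1 ≤ N := by
    calc n₀ + 1 = (n₀ + 1) * 1 := by ring
    _ ≤ (n₀ + 1) * K := Nat.mul_le_mul_left _ hK1
  set M : ℕ := N - 1 with hMdef
  have hMN : M + 1 = N := by omega
  have hMn₀ : n₀ ≤ M := by omega
  have hdomM : pdom (cpw c M) = Dd := hstab' M hMn₀
  have hdomN : pdom (cpw c N) = Dd := hstab' N (by omega)
  -- the element a and its inverse
  set a : X ≃. X := (cpw c M).trans b with ha
  set abar : X ≃. X := w.trans (cpw c N) with habar
  have haS : a ∈ S := hS _ (hcpwS M (by omega)) b hbS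
  have habarS : abar ∈ S := hS w hwS _ (hcpwS N (by omega))
  have hai : a i = some j := by
    rw [ha, trans_apply', hiD M]
    simpa using hbi
  have hafin : (pdom a).Finite := by
    apply Set.Finite.subset hDdfin
    intro z hz
    rw [← hdomM]
    exact pdom_trans_subset _ _ hz
  -- key: ∀ p q, a p = some q ↔ abar q = some p
  have hkey : ∀ p q : X, a p = some q ↔ abar q = some p := by
    intro p q
    constructor
    · intro hpq
      rw [ha, trans_apply'] at hpq
      cases hz : cpw c M p with
      | none => rw [hz] at hpq; simp at hpq
      | some z =>
          rw [hz] at hpq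
          simp only [Option.bind_some] at hpq
          have hpD : p ∈ Dd := by
            rw [← hdomM]
            show cpw c M p ≠ none
            rw [hz]; simp
          set P : ↥Dd := ⟨p, hpD⟩ with hPdef
          have hzP : z = (((σ^M) P : ↥Dd) : X) := by
            have h0 := hpowσ M P
            rw [show (P : X) = p from rfl, hz] at h0
            exact Option.some_injective _ h0
          have hcz : c z = some p := by
            rw [hzP, hσ ((σ^M) P)]
            congr 1
            have e1 : σ ((σ^M) P) = (σ^(M+1)) P := by
              rw [pow_succ', Equiv.Perm.mul_apply]
            rw [e1, hMN, hσN]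
            simp; rfl
          have hwq : w q = some p := by
            rw [hc, trans_apply', hpq] at hcz
            simpa using hcz
          rw [habar, trans_apply', hwq]
          simp only [Option.bind_some]
          rw [show p = (P : X) from rfl, hpowσ N P, hσN]
          simp
    · intro hq
      rw [habar, trans_apply'] at hq
      cases ht : w q with
      | none => rw [ht] at hq; simp at hq
      | some t =>
          rw [ht] at hq
          simp only [Option.bind_some] at hq
          have htD : t ∈ Dd := by
            rw [← hdomN]
            show cpw c N t ≠ none
            rw [hq]; simp
          set T : ↥Dd := ⟨t, htD⟩ with hTdef
          have hpt : p = t := by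
            have h0 := hpowσ N T
            rw [hσN] at h0
            simp only [Equiv.Perm.one_apply] at h0
            rw [hq] at h0
            exact Option.some_injective _ h0
          subst hpt
          -- p ∈ Dd, w q = some p
          set P : ↥Dd := ⟨p, htD⟩ with hPdef
          set z : X := (((σ^M) P : ↥Dd) : X) with hzdef
          have hzD : z ∈ Dd := ((σ^M) P).2
          obtain ⟨q', hbq'⟩ : ∃ q', b z = some q' := by
            have hne : b z ≠ none := hDsubb hzD
            exact Option.ne_none_iff_exists'.mp hne
          have hcz : c z = some p := by
            rw [hzdef, hσ ((σ^M) P)]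
            congr 1
            have e1 : σ ((σ^M) P) = (σ^(M+1)) P := by
              rw [pow_succ', Equiv.Perm.mul_apply]
            rw [e1, hMN, hσN]
            simp; rfl
          have hwq' : w q' = some p := by
            rw [hc, trans_apply', hbq'] at hcz
            simpa using hcz
          have hqq' : q = q' := by
            apply PEquiv.inj w (b := p)
            · show p ∈ w q; rw [ht]; rfl
            · show p ∈ w q'; rw [hwq']; rfl
          rw [ha, trans_apply', show (p : X) = (P : X) from rfl, hpowσ M P, ← hzdef]
          simp only [Option.bind_some]
          rw [hbq', hqq']
  have hsymm : a.symm = abar := by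
    apply PEquiv.ext
    intro q
    cases hq : abar q with
    | some p =>
        exact (PEquiv.eq_some_iff a).mpr ((hkey p q).mpr hq)
    | none =>
        cases hq' : a.symm q with
        | none => rfl
        | some p =>
            have h1 : a p = some q := (PEquiv.eq_some_iff a).mp hq'
            have h2 : abar q = some p := (hkey p q).mp h1
            rw [h2] at hq
            exact absurd hq (by simp)
  exact ⟨a, haS, hafin, hai, hsymm ▸ habarS⟩
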